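/- Let r, p, n, k be positive integers with p dividing r. Then the ℂ-linear span of {φ_k(x_d) : d ∈ A_k(r,p,n)} in End(V^{⊗k}) is closed under composition, and hence is a unital subalgebra of End(V^{⊗k}) (the identity map equals φ_k(x_d) summed over the partitions coarser than or equal to the partition {{1,1′},…,{k,k′}}, which all lie in Π_k(r)). -/

import Mathlib

open scoped Classical
open Matrix

noncomputable section

namespace Tanabe

/-! ## Tensor space model of `V^{⊗k}` for `V = ℂ^n`.
A tensor is encoded by its coordinates, i.e. a function `(Fin k → Fin n) → ℂ`;
the basis vector `v_{i_1} ⊗ ⋯ ⊗ v_{i_k}` corresponds to the indicator function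
of the tuple `(i_1, …, i_k)`. -/

abbrev TP (n k : ℕ) : Type := (Fin k → Fin n) → ℂ

/-- The linear endomorphism of `V^{⊗k}` with matrix `K` in the standard basis:
it sends the basis vector indexed by the tuple `i` to `∑ₒ K o i • (basis vector o)`. -/
def kernelMap (n k : ℕ) (K : (Fin k → Fin n) → (Fin k → Fin n) → ℂ) :
    TP n k →ₗ[ℂ] TP n k where
  toFun f := fun o => ∑ i : Fin k → Fin n, K o i * f i
  map_add' f g := by
    funext o
    simp only [Pi.add_apply, mul_add]
    exact Finset.sum_add_distrib
  map_smul' c f := by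
    funext o
    simp only [Pi.smul_apply, smul_eq_mul, RingHom.id_apply]
    rw [Finset.mul_sum]
    exact Finset.sum_congr rfl fun i _ => by ring

/-- The diagonal (tensor-power) action `g^{⊗k}` of a matrix `g` on `V^{⊗k}`. -/
def tensorPow (n k : ℕ) (g : Matrix (Fin n) (Fin n) ℂ) : TP n k →ₗ[ℂ] TP n k :=
  kernelMap n k fun o i => ∏ t : Fin k, g (o t) (i t)

/-! ## Set partitions of `{1,…,t,1′,…,t′}`.
A set partition of `{1,…,t,1′,…,t′}` is encoded as a `Setoid` on `Fin t ⊕ Fin t`,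
with `Sum.inl` the unprimed (top row) elements and `Sum.inr` the primed (bottom row)
elements; blocks are the equivalence classes. -/

abbrev SP (t : ℕ) : Type := Setoid (Fin t ⊕ Fin t)

/-- `N(B)`: number of top-row (unprimed) elements in the block `q` of `d`. -/
def topCt {t : ℕ} (d : SP t) (q : Quotient d) : ℕ :=
  Nat.card {a : Fin t // Quotient.mk d (Sum.inl a) = q}

/-- `M(B)`: number of bottom-row (primed) elements in the block `q` of `d`. -/
def botCt {t : ℕ} (d : SP t) (q : Quotient d) : ℕ :=
  Nat.card {a : Fin t // Quotient.mk d (Sum.inr a) = q}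

/-- `|d|`: the number of blocks of `d`. -/
def nBlocks {t : ℕ} (d : SP t) : ℕ := Nat.card (Quotient d)

/-- Coefficient of `φ_t(x_d)`: equals `1` if the equalities among the values of the
combined tuple `c` are *exactly* those prescribed by `d`, and `0` otherwise. -/
def coeX (n t : ℕ) (d : SP t) (c : Fin t ⊕ Fin t → Fin n) : ℂ :=
  if ∀ a b : Fin t ⊕ Fin t, d.r a b ↔ c a = c b then 1 else 0

/-- Coefficient of `φ_t(d)` (the diagram basis): equals `1` if the values of the
combined tuple `c` agree on each block of `d`, and `0` otherwise. -/
def coeD (n t : ℕ) (d : SP t) (c : Fin t ⊕ Fin t → Fin n) : ℂ :=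
  if ∀ a b : Fin t ⊕ Fin t, d.r a b → c a = c b then 1 else 0

/-- The operator `φ_t(x_d)` on `V^{⊗t}`. -/
def phiX (n t : ℕ) (d : SP t) : TP n t →ₗ[ℂ] TP n t :=
  kernelMap n t fun o i => coeX n t d (Sum.elim i o)

/-- The operator `φ_t(d)` on `V^{⊗t}` (diagram basis). -/
def phiD (n t : ℕ) (d : SP t) : TP n t →ₗ[ℂ] TP n t :=
  kernelMap n t fun o i => coeD n t d (Sum.elim i o)

/-- `d ∈ Π_t(r)` : every block `B` satisfies `N(B) ≡ M(B) (mod r)`. -/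
def inPi (r : ℕ) {t : ℕ} (d : SP t) : Prop :=
  ∀ q : Quotient d, (topCt d q : ℤ) ≡ (botCt d q : ℤ) [ZMOD (r : ℤ)]

/-- `d ∈ Λ_t(r,p,n)` (here `m = r/p`). -/
def inLambda (r p n : ℕ) {t : ℕ} (d : SP t) : Prop :=
  nBlocks d = n ∧
  (∀ q : Quotient d,
    ((topCt d q : ℤ) ≡ (botCt d q : ℤ) [ZMOD ((r / p : ℕ) : ℤ)]) ∧
    ¬ ((topCt d q : ℤ) ≡ (botCt d q : ℤ) [ZMOD (r : ℤ)])) ∧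
  (∀ q q' : Quotient d,
    (topCt d q : ℤ) - (botCt d q : ℤ) ≡ (topCt d q' : ℤ) - (botCt d q' : ℤ) [ZMOD (r : ℤ)])

/-- `d ∈ Θ_t(r,p,n)` (here `m = r/p`). -/
def inTheta (r p n : ℕ) {t : ℕ} (d : SP t) : Prop :=
  n < nBlocks d ∧
  (∀ q : Quotient d, (topCt d q : ℤ) ≡ (botCt d q : ℤ) [ZMOD ((r / p : ℕ) : ℤ)]) ∧
  ∃ q : Quotient d, ¬ ((topCt d q : ℤ) ≡ (botCt d q : ℤ) [ZMOD (r : ℤ)])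

/-- `d ∈ A_t(r,p,n) = Π_t(r) ∪ Λ_t(r,p,n) ∪ Θ_t(r,p,n)`. -/
def inA (r p n : ℕ) {t : ℕ} (d : SP t) : Prop :=
  inPi r d ∨ inLambda r p n d ∨ inTheta r p n d

/-- `d ∈ A_{k+1/2}` : `k+1` and `(k+1)′` lie in the same block. -/
def isHalf (k : ℕ) (d : SP (k + 1)) : Prop :=
  d.r (Sum.inl (Fin.last k)) (Sum.inr (Fin.last k))

/-- `d ∈ Π_t(r,p,n)` : `d ∈ A_t(r,p,n)` with at most `n` blocks. -/
def inPiRPN (r p n : ℕ) {t : ℕ} (d : SP t) : Prop :=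
  inA r p n d ∧ nBlocks d ≤ n

/-- `{φ_k(x_d) : d ∈ A_k(r,p,n)}`. -/
def TanSet (r p n k : ℕ) : Set (TP n k →ₗ[ℂ] TP n k) :=
  {T | ∃ d : SP k, inA r p n d ∧ T = phiX n k d}

/-- `{φ_{k+1}(x_d) : d ∈ A_{k+1/2}(r,p,n)}` (as endomorphisms of `V^{⊗(k+1)}`). -/
def TanSetHalf (r p n k : ℕ) : Set (TP n (k + 1) →ₗ[ℂ] TP n (k + 1)) :=
  {T | ∃ d : SP (k + 1), (inA r p n d ∧ isHalf k d) ∧ T = phiX n (k + 1) d}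

/-! ## The groups `G(r,p,n)` and `L(r,p,n)` as matrix groups. -/

/-- The monomial matrix with underlying permutation `π` and weights `a` :
its `(i,j)` entry is `a j` if `i = π j` and `0` otherwise, so that it maps
`v_j ↦ a j • v_{π j}`. -/
def monoMat (n : ℕ) (π : Equiv.Perm (Fin n)) (a : Fin n → ℂ) :
    Matrix (Fin n) (Fin n) ℂ :=
  Matrix.of fun i j => if i = π j then a j else 0

/-- `G(r,p,n)` as a set of matrices: matrices with exactly one nonzero entry in each
row and column, whose nonzero entries are `r`-th roots of unity, and such that the
`m = r/p`-th power of the product of the nonzero entries is `1`. -/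
def GSet (r p n : ℕ) : Set (Matrix (Fin n) (Fin n) ℂ) :=
  {g | ∃ (π : Equiv.Perm (Fin n)) (a : Fin n → ℂ),
    (∀ i, a i ^ r = 1) ∧ (∏ i, a i) ^ (r / p) = 1 ∧ g = monoMat n π a}

/-- The last index of `Fin n` (position `n` in 1-indexed notation). -/
def lastIdx (n : ℕ) (hn : 0 < n) : Fin n := ⟨n - 1, by omega⟩

/-- `L(r,p,n)` as a set of matrices: elements of `G(r,p,n)` whose `(n,n)` entry
is nonzero. -/
def LSet (r p n : ℕ) (hn : 0 < n) : Set (Matrix (Fin n) (Fin n) ℂ) :=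
  {g | g ∈ GSet r p n ∧ g (lastIdx n hn) (lastIdx n hn) ≠ 0}

/-- The centralizer algebra `End_{G(r,p,n)}(V^{⊗k})`. -/
def centG (r p n k : ℕ) : Set (TP n k →ₗ[ℂ] TP n k) :=
  {F | ∀ g ∈ GSet r p n, F ∘ₗ tensorPow n k g = tensorPow n k g ∘ₗ F}

/-- The subspace `W = V^{⊗k} ⊗ ℂ v_n` of `V^{⊗(k+1)}` : coordinate functions
supported on tuples whose last entry is the last index. -/
def Wsub (n k : ℕ) (hn : 0 < n) : Submodule ℂ (TP n (k + 1)) where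
  carrier := {f | ∀ j : Fin (k + 1) → Fin n, j (Fin.last k) ≠ lastIdx n hn → f j = 0}
  add_mem' := by
    intro a b ha hb j hj
    simp [Pi.add_apply, ha j hj, hb j hj]
  zero_mem' := by intro j hj; rfl
  smul_mem' := by
    intro c a ha j hj
    simp [Pi.smul_apply, ha j hj]


/-! ## Group structure -/

abbrev GLn (n : ℕ) := Matrix.GeneralLinearGroup (Fin n) ℂ

lemma monoMat_mul (n : ℕ) (π σ : Equiv.Perm (Fin n)) (a b : Fin n → ℂ) :
    monoMat n π a * monoMat n σ b = monoMat n (π * σ) (fun j => a (σ j) * b j) := by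
  ext i j
  simp only [monoMat, Matrix.mul_apply, Matrix.of_apply, mul_ite, mul_zero, ite_mul, zero_mul]
  rw [Finset.sum_ite_eq' Finset.univ (σ j)]
  simp [Equiv.Perm.mul_apply]
  congr

lemma monoMat_one (n : ℕ) : monoMat n 1 (fun _ => (1 : ℂ)) = 1 := by
  ext i j
  simp [monoMat, Matrix.one_apply]
  congr

lemma one_mem_GSet (r p n : ℕ) : (1 : Matrix (Fin n) (Fin n) ℂ) ∈ GSet r p n :=
  ⟨1, fun _ => 1, fun _ => one_pow r, by simp, (monoMat_one n).symm⟩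

lemma mul_mem_GSet {r p n : ℕ} {g h : Matrix (Fin n) (Fin n) ℂ}
    (hg : g ∈ GSet r p n) (hh : h ∈ GSet r p n) : g * h ∈ GSet r p n := by
  obtain ⟨π, a, ha, hpa, rfl⟩ := hg
  obtain ⟨σ, b, hb, hpb, rfl⟩ := hh
  refine ⟨π * σ, fun j => a (σ j) * b j, fun i => by rw [mul_pow, ha, hb, one_mul], ?_,
    monoMat_mul n π σ a b⟩
  have h1 : (∏ i, (a (σ i) * b i)) = (∏ i, a i) * ∏ i, b i := by
    rw [Finset.prod_mul_distrib, Equiv.prod_comp σ a]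
  rw [h1, mul_pow, hpa, hpb, one_mul]

lemma a_ne_zero {r : ℕ} (hr : 0 < r) {a : ℂ} (ha : a ^ r = 1) : a ≠ 0 := by
  intro h0
  rw [h0, zero_pow hr.ne'] at ha
  exact zero_ne_one ha

lemma monoMat_mul_inv (n : ℕ) (π : Equiv.Perm (Fin n)) (a : Fin n → ℂ)
    (ha : ∀ i, a i ≠ 0) :
    monoMat n π a * monoMat n π⁻¹ (fun j => (a (π⁻¹ j))⁻¹) = 1 := by
  simp only [monoMat_mul]
  rw [mul_inv_cancel,
    show (fun j => a (π⁻¹ j) * (a (π⁻¹ j))⁻¹) = fun _ : Fin n => (1 : ℂ) from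
      funext fun j => mul_inv_cancel₀ (ha _),
    monoMat_one]

/-- The value of the inverse of a unit whose underlying matrix is a monomial matrix. -/
lemma gl_inv_val {n : ℕ} (g : GLn n) (π : Equiv.Perm (Fin n)) (a : Fin n → ℂ)
    (ha : ∀ i, a i ≠ 0) (hg : (↑g : Matrix (Fin n) (Fin n) ℂ) = monoMat n π a) :
    (↑g⁻¹ : Matrix (Fin n) (Fin n) ℂ) = monoMat n π⁻¹ (fun j => (a (π⁻¹ j))⁻¹) := by
  have hmul : (↑g : Matrix (Fin n) (Fin n) ℂ) *
      monoMat n π⁻¹ (fun j => (a (π⁻¹ j))⁻¹) = 1 := by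
    rw [hg]; exact monoMat_mul_inv n π a ha
  calc (↑g⁻¹ : Matrix (Fin n) (Fin n) ℂ)
      = ↑g⁻¹ * ((↑g : Matrix (Fin n) (Fin n) ℂ) *
          monoMat n π⁻¹ (fun j => (a (π⁻¹ j))⁻¹)) := by rw [hmul, mul_one]
    _ = ((↑g⁻¹ : Matrix (Fin n) (Fin n) ℂ) * ↑g) *
          monoMat n π⁻¹ (fun j => (a (π⁻¹ j))⁻¹) := by rw [mul_assoc]
    _ = monoMat n π⁻¹ (fun j => (a (π⁻¹ j))⁻¹) := by
          rw [← Units.val_mul, inv_mul_cancel, Units.val_one, one_mul]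

lemma inv_mem_GSet {r p n : ℕ} (hr : 0 < r) {g : GLn n}
    (hg : (↑g : Matrix (Fin n) (Fin n) ℂ) ∈ GSet r p n) :
    (↑g⁻¹ : Matrix (Fin n) (Fin n) ℂ) ∈ GSet r p n := by
  obtain ⟨π, a, ha, hpa, hgm⟩ := hg
  have hane : ∀ i, a i ≠ 0 := fun i => a_ne_zero hr (ha i)
  refine ⟨π⁻¹, fun j => (a (π⁻¹ j))⁻¹, fun i => by rw [inv_pow, ha, inv_one], ?_,
    gl_inv_val g π a hane hgm⟩
  rw [Finset.prod_inv_distrib, Equiv.prod_comp π⁻¹ a, inv_pow, hpa, inv_one]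

/-- The complex reflection group `G(r,p,n)` as a subgroup of `GL_n(ℂ)`. -/
def GGroup (r p n : ℕ) (hr : 0 < r) : Subgroup (GLn n) where
  carrier := {g | (↑g : Matrix (Fin n) (Fin n) ℂ) ∈ GSet r p n}
  one_mem' := by
    show (↑(1 : GLn n) : Matrix (Fin n) (Fin n) ℂ) ∈ GSet r p n
    rw [Units.val_one]; exact one_mem_GSet r p n
  mul_mem' := by
    intro g h hg hh
    show (↑(g * h) : Matrix (Fin n) (Fin n) ℂ) ∈ GSet r p n
    rw [Units.val_mul]; exact mul_mem_GSet hg hh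
  inv_mem' := by
    intro g hg
    exact inv_mem_GSet hr hg

lemma monoMat_last {n : ℕ} (hn : 0 < n) (π : Equiv.Perm (Fin n)) (a : Fin n → ℂ)
    (h : monoMat n π a (lastIdx n hn) (lastIdx n hn) ≠ 0) :
    π (lastIdx n hn) = lastIdx n hn ∧ a (lastIdx n hn) ≠ 0 := by
  by_cases hp : lastIdx n hn = π (lastIdx n hn)
  · refine ⟨hp.symm, ?_⟩
    intro h0
    apply h
    simp [monoMat, ← hp, h0]
  · exfalso; apply h; simp [monoMat, hp]

lemma monoMat_last_entry {n : ℕ} (hn : 0 < n) (π : Equiv.Perm (Fin n)) (a : Fin n → ℂ)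
    (hp : π (lastIdx n hn) = lastIdx n hn) :
    monoMat n π a (lastIdx n hn) (lastIdx n hn) = a (lastIdx n hn) := by
  simp [monoMat, hp]

/-- The subgroup `L(r,p,n)` of `G(r,p,n)` (matrices with nonzero `(n,n)` entry). -/
def LGroup (r p n : ℕ) (hr : 0 < r) (hn : 0 < n) : Subgroup (GLn n) where
  carrier := {g | (↑g : Matrix (Fin n) (Fin n) ℂ) ∈ LSet r p n hn}
  one_mem' := by
    refine ⟨?_, ?_⟩
    · show (↑(1 : GLn n) : Matrix (Fin n) (Fin n) ℂ) ∈ GSet r p n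
      rw [Units.val_one]; exact one_mem_GSet r p n
    · rw [Units.val_one]
      simp [Matrix.one_apply]
  mul_mem' := by
    rintro g h ⟨hg, hge⟩ ⟨hh, hhe⟩
    refine ⟨?_, ?_⟩
    · show (↑(g * h) : Matrix (Fin n) (Fin n) ℂ) ∈ GSet r p n
      rw [Units.val_mul]; exact mul_mem_GSet hg hh
    · obtain ⟨π, a, ha, hpa, hgm⟩ := hg
      obtain ⟨σ, b, hb, hpb, hhm⟩ := hh
      rw [hgm] at hge
      rw [hhm] at hhe
      obtain ⟨hπ, ha0⟩ := monoMat_last hn π a hge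
      obtain ⟨hσ, hb0⟩ := monoMat_last hn σ b hhe
      rw [Units.val_mul, hgm, hhm, monoMat_mul]
      rw [monoMat_last_entry hn _ _ (by simp [Equiv.Perm.mul_apply, hσ, hπ])]
      simp only [hσ]
      exact mul_ne_zero ha0 hb0
  inv_mem' := by
    rintro g ⟨hg, hge⟩
    obtain ⟨π, a, ha, hpa, hgm⟩ := hg
    have hane : ∀ i, a i ≠ 0 := fun i => a_ne_zero hr (ha i)
    rw [hgm] at hge
    obtain ⟨hπ, ha0⟩ := monoMat_last hn π a hge
    refine ⟨inv_mem_GSet hr ⟨π, a, ha, hpa, hgm⟩, ?_⟩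
    rw [gl_inv_val g π a hane hgm]
    have hπi : π⁻¹ (lastIdx n hn) = lastIdx n hn := by
      conv_lhs => rw [← hπ]
      simp
    rw [monoMat_last_entry hn _ _ hπi]
    simp only [hπi]
    exact inv_ne_zero ha0

lemma GGroup_le (r p n : ℕ) (hr : 0 < r) : GGroup r p n hr ≤ GGroup r 1 n hr := by
  rintro g ⟨π, a, ha, hpa, hgm⟩
  refine ⟨π, a, ha, ?_, hgm⟩
  rw [Nat.div_one, ← Finset.prod_pow]
  simp [ha]

lemma LGroup_le (r p n : ℕ) (hr : 0 < r) (hn : 0 < n) :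
    LGroup r p n hr hn ≤ LGroup r 1 n hr hn := by
  rintro g ⟨hg, hge⟩
  exact ⟨GGroup_le r p n hr hg, hge⟩

lemma LGroup_le_GGroup (r p n : ℕ) (hr : 0 < r) (hn : 0 < n) :
    LGroup r p n hr hn ≤ GGroup r p n hr := fun _ hg => hg.1

lemma LGroup_le_G1 (r p n : ℕ) (hr : 0 < r) (hn : 0 < n) :
    LGroup r p n hr hn ≤ GGroup r 1 n hr :=
  le_trans (LGroup_le_GGroup r p n hr hn) (GGroup_le r p n hr)

/-! ## Representation-theoretic notions -/

section Reps

variable {G : Type*} [Monoid G] {V : Type*} [AddCommGroup V] [Module ℂ V]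

/-- A submodule invariant under a representation. -/
def RepInvariant (ρ : Representation ℂ G V) (q : Submodule ℂ V) : Prop :=
  ∀ (g : G), ∀ v ∈ q, ρ g v ∈ q

/-- Irreducibility of a representation. -/
def RepIrreducible (ρ : Representation ℂ G V) : Prop :=
  Nontrivial V ∧ ∀ q : Submodule ℂ V, RepInvariant ρ q → q = ⊥ ∨ q = ⊤

/-- Irreducibility of an invariant subspace, as a subrepresentation. -/
def SubIrreducible (ρ : Representation ℂ G V) (q : Submodule ℂ V) : Prop :=
  q ≠ ⊥ ∧ ∀ q' : Submodule ℂ V, q' ≤ q → RepInvariant ρ q' → q' = ⊥ ∨ q' = q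

/-- Two (invariant) subspaces are isomorphic as subrepresentations: there is a
`ℂ`-linear equivalence between them intertwining the action. -/
def IsSubrepIso (ρ : Representation ℂ G V) (q q' : Submodule ℂ V) : Prop :=
  ∃ e : q ≃ₗ[ℂ] q', ∀ (g : G) (x : V) (hx : x ∈ q) (hgx : ρ g x ∈ q),
    ((e ⟨ρ g x, hgx⟩ : q') : V) = ρ g ((e ⟨x, hx⟩ : q') : V)

/-- A representation is multiplicity free: it is an (internal) direct sum of
pairwise non-isomorphic irreducible subrepresentations. -/
def RepMultFree (ρ : Representation ℂ G V) : Prop :=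
  ∃ (ι : Type) (_ : Fintype ι) (W : ι → Submodule ℂ V),
    (∀ i, RepInvariant ρ (W i)) ∧
    (∀ i, SubIrreducible ρ (W i)) ∧
    iSupIndep W ∧ (⨆ i, W i) = ⊤ ∧
    (∀ i j, i ≠ j → ¬ IsSubrepIso ρ (W i) (W j))

/-- Restriction of a representation of `K` to a subgroup `H ≤ K`. -/
def restrictRep {G : Type*} [Group G] {H K : Subgroup G} (h : H ≤ K)
    (ρ : Representation ℂ ↥K V) : Representation ℂ ↥H V :=
  MonoidHom.comp ρ (Subgroup.inclusion h)

end Reps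

/-! ## The elements `ζ_i^l ζ_j^{-l} s_{ij}` and the central elements `κ` -/

/-- `ζ = exp(2πi/r)`, a primitive `r`-th root of unity. -/
def zeta (r : ℕ) : ℂ := Complex.exp (2 * Real.pi * Complex.I / r)

lemma zeta_pow_self {r : ℕ} (hr : 0 < r) : zeta r ^ r = 1 := by
  rw [zeta, ← Complex.exp_nat_mul]
  rw [show (r : ℂ) * (2 * Real.pi * Complex.I / r) = 2 * Real.pi * Complex.I by
    rw [mul_div_assoc']
    exact mul_div_cancel_left₀ _ (Nat.cast_ne_zero.mpr hr.ne')]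
  exact Complex.exp_two_pi_mul_I

lemma zeta_ne_zero (r : ℕ) : zeta r ≠ 0 := Complex.exp_ne_zero _

/-- Weights of the monomial matrix `ζ_i^l ζ_j^{-l} s_{ij}` : `ζ^l` in position `i`,
`ζ^{-l}` in position `j`, `1` elsewhere. -/
def zijWt (r l : ℕ) {n : ℕ} (i j : Fin n) : Fin n → ℂ :=
  fun t => if t = i then zeta r ^ l else if t = j then (zeta r ^ l)⁻¹ else 1

/-- The matrix `ζ_i^l ζ_j^{-l} s_{ij}`. -/
def zijMat (n r l : ℕ) (i j : Fin n) : Matrix (Fin n) (Fin n) ℂ :=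
  monoMat n (Equiv.swap i j) (zijWt r l i j)

lemma zijWt_ne_zero (r l : ℕ) {n : ℕ} (i j : Fin n) (t : Fin n) :
    zijWt r l i j t ≠ 0 := by
  unfold zijWt
  split_ifs
  · exact pow_ne_zero _ (zeta_ne_zero r)
  · exact inv_ne_zero (pow_ne_zero _ (zeta_ne_zero r))
  · exact one_ne_zero

lemma zijWt_pow {r l : ℕ} (hr : 0 < r) {n : ℕ} (i j : Fin n) (t : Fin n) :
    zijWt r l i j t ^ r = 1 := by
  unfold zijWt
  split_ifs
  · rw [← pow_mul, mul_comm, pow_mul, zeta_pow_self hr, one_pow]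
  · rw [inv_pow, ← pow_mul, mul_comm, pow_mul, zeta_pow_self hr, one_pow, inv_one]
  · exact one_pow r

lemma zijWt_prod {r l : ℕ} {n : ℕ} {i j : Fin n} (hij : i ≠ j) :
    (∏ t, zijWt r l i j t) = 1 := by
  have hfun : (fun t => zijWt r l i j t) =
      fun t => (if t = i then zeta r ^ l else 1) * (if t = j then (zeta r ^ l)⁻¹ else 1) := by
    funext t
    by_cases h1 : t = i <;> by_cases h2 : t = j
    · exact absurd (h1.symm.trans h2) hij
    · simp [zijWt, h1, h2, hij]
    · simp [zijWt, h1, h2, hij, Ne.symm hij]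
    · simp [zijWt, h1, h2]
  rw [hfun, Finset.prod_mul_distrib, Finset.prod_ite_eq' Finset.univ i,
    Finset.prod_ite_eq' Finset.univ j]
  simp [mul_inv_cancel₀ (pow_ne_zero l (zeta_ne_zero r))]

lemma zij_mem_GSet (r p n l : ℕ) (hr : 0 < r) (i j : Fin n) (hij : i ≠ j) :
    zijMat n r l i j ∈ GSet r p n := by
  refine ⟨Equiv.swap i j, zijWt r l i j, zijWt_pow hr i j, ?_, rfl⟩
  rw [zijWt_prod hij, one_pow]

/-- A monomial matrix with nonzero weights, as an element of `GL_n(ℂ)`. -/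
def monoUnit (n : ℕ) (π : Equiv.Perm (Fin n)) (a : Fin n → ℂ) (ha : ∀ i, a i ≠ 0) :
    GLn n where
  val := monoMat n π a
  inv := monoMat n π⁻¹ (fun j => (a (π⁻¹ j))⁻¹)
  val_inv := monoMat_mul_inv n π a ha
  inv_val := by
    simp only [monoMat_mul]
    rw [inv_mul_cancel,
      show (fun j => (a (π⁻¹ (π j)))⁻¹ * a j) = fun _ : Fin n => (1 : ℂ) from
        funext fun j => by rw [Equiv.Perm.coe_inv, Equiv.symm_apply_apply, inv_mul_cancel₀ (ha _)],
      monoMat_one]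

/-- The element `ζ_i^l ζ_j^{-l} s_{ij}` of `G(r,p,n)`. -/
def zijG (r p n l : ℕ) (hr : 0 < r) (i j : Fin n) (hij : i ≠ j) : ↥(GGroup r p n hr) :=
  ⟨monoUnit n (Equiv.swap i j) (zijWt r l i j) (zijWt_ne_zero r l i j),
   zij_mem_GSet r p n l hr i j hij⟩

/-- The element `κ_{r,n} = (1/r)·Σ_{l<r} Σ_{i<j} ζ_i^l ζ_j^{-l} s_{ij}` of the group
algebra `ℂ[G(r,p,n)]`. -/
def kappaGA (r p n : ℕ) (hr : 0 < r) : MonoidAlgebra ℂ ↥(GGroup r p n hr) :=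
  (1 / (r : ℂ)) • ∑ l ∈ Finset.range r, ∑ i : Fin n, ∑ j : Fin n,
    if h : i < j then MonoidAlgebra.single (zijG r p n l hr i j h.ne) 1 else 0

lemma zijL_last (r l : ℕ) {n : ℕ} (hn : 0 < n) (i j : Fin n)
    (hi : i ≠ lastIdx n hn) (hj : j ≠ lastIdx n hn) :
    zijMat n r l i j (lastIdx n hn) (lastIdx n hn) ≠ 0 := by
  have hswap : Equiv.swap i j (lastIdx n hn) = lastIdx n hn :=
    Equiv.swap_apply_of_ne_of_ne (Ne.symm hi) (Ne.symm hj)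
  rw [zijMat, monoMat_last_entry hn _ _ hswap]
  exact zijWt_ne_zero r l i j _

/-- The element `ζ_i^l ζ_j^{-l} s_{ij}` of `L(r,p,n)`, for `i, j ≤ n-1`. -/
def zijL (r p n l : ℕ) (hr : 0 < r) (hn : 0 < n) (i j : Fin n) (hij : i ≠ j)
    (hi : i ≠ lastIdx n hn) (hj : j ≠ lastIdx n hn) : ↥(LGroup r p n hr hn) :=
  ⟨monoUnit n (Equiv.swap i j) (zijWt r l i j) (zijWt_ne_zero r l i j),
   ⟨zij_mem_GSet r p n l hr i j hij, zijL_last r l hn i j hi hj⟩⟩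

/-- The element `κ_{r,n-1} = (1/r)·Σ_{l<r} Σ_{1≤i<j≤n-1} ζ_i^l ζ_j^{-l} s_{ij}` of the
group algebra `ℂ[L(r,p,n)]`. -/
def kappaLA (r p n : ℕ) (hr : 0 < r) (hn : 0 < n) :
    MonoidAlgebra ℂ ↥(LGroup r p n hr hn) :=
  (1 / (r : ℂ)) • ∑ l ∈ Finset.range r, ∑ i : Fin n, ∑ j : Fin n,
    if h : i < j ∧ (j : ℕ) < n - 1 then
      MonoidAlgebra.single
        (zijL r p n l hr hn i j h.1.ne
          (by
            refine Fin.ne_of_val_ne ?_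
            have h1 : (i : ℕ) < (j : ℕ) := h.1
            have h2 : (j : ℕ) < n - 1 := h.2
            show (i : ℕ) ≠ n - 1
            omega)
          (by
            refine Fin.ne_of_val_ne ?_
            have h2 : (j : ℕ) < n - 1 := h.2
            show (j : ℕ) ≠ n - 1
            omega)) 1
    else 0

/-! ## The induced representation of statement on `Ind_L^G σ` -/

/-- The right regular representation of a group `G` on the space of functions
`G → ℂ`, given by `(x · f)(g) = f(g x)`. -/
def regRep (G : Type*) [Group G] : Representation ℂ G (G → ℂ) where
  toFun x :=
    { toFun := fun f => fun g => f (g * x)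
      map_add' := fun f g => rfl
      map_smul' := fun c f => rfl }
  map_one' := by
    refine LinearMap.ext fun f => ?_
    funext g
    simp
  map_mul' x y := by
    refine LinearMap.ext fun f => ?_
    funext g
    simp [Module.End.mul_apply, mul_assoc]

/-- The space of functions `f : G(r,p,n) → ℂ` with `f(hg) = σ(h)·f(g)` for all
`h ∈ L(r,p,n)`, where `σ(h)` is the `(n,n)` entry of `h`. -/
def IndSig (r p n : ℕ) (hr : 0 < r) (hn : 0 < n) :
    Submodule ℂ (↥(GGroup r p n hr) → ℂ) where
  carrier := {f | ∀ h g : ↥(GGroup r p n hr),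
    ((h : GLn n) : Matrix (Fin n) (Fin n) ℂ) ∈ LSet r p n hn →
    f (h * g) = ((h : GLn n) : Matrix (Fin n) (Fin n) ℂ) (lastIdx n hn) (lastIdx n hn) * f g}
  add_mem' := by
    intro a b ha hb h g hh
    simp [ha h g hh, hb h g hh, mul_add]
  zero_mem' := by intro h g hh; simp
  smul_mem' := by
    intro c a ha h g hh
    simp [ha h g hh]
    ring

lemma IndSig_invariant (r p n : ℕ) (hr : 0 < r) (hn : 0 < n) :
    RepInvariant (regRep ↥(GGroup r p n hr)) (IndSig r p n hr hn) := by
  intro x f hf h g hh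
  show f ((h * g) * x) = _ * f (g * x)
  rw [mul_assoc]
  exact hf h (g * x) hh

/-- The natural representation of `G(r,p,n)` on `ℂ^n` by matrix-vector
multiplication. -/
def natRep (r p n : ℕ) (hr : 0 < r) : Representation ℂ ↥(GGroup r p n hr) (Fin n → ℂ) where
  toFun g := Matrix.mulVecLin ((g : GLn n) : Matrix (Fin n) (Fin n) ℂ)
  map_one' := by
    simp only [OneMemClass.coe_one, Units.val_one, Matrix.mulVecLin_one]
    rfl
  map_mul' g h := by
    simp only [Subgroup.coe_mul, Units.val_mul, Matrix.mulVecLin_mul]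
    rw [Module.End.mul_eq_comp]

/-! ## The operators `Z_{t,r}` and `Z_{t+1/2,r}` -/

/-- `S ∪ S′` as a finite subset of `Fin t ⊕ Fin t`. -/
def SSfin {t : ℕ} (S : Finset (Fin t)) : Finset (Fin t ⊕ Fin t) :=
  Finset.univ.filter fun x => Sum.elim (· ∈ S) (· ∈ S) x

/-- The set partition `b_S` with blocks `S ∪ S′` and `{l,l′}` for `l ∉ S`. -/
def bS {t : ℕ} (S : Finset (Fin t)) : SP t :=
  Setoid.ker fun x : Fin t ⊕ Fin t =>
    if x ∈ SSfin S then (none : Option (Fin t ⊕ Fin t)) else some x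

/-- The set partition `d_I` with blocks `I`, `(S ∪ S′) \ I` and `{l,l′}` for `l ∉ S`. -/
def dI {t : ℕ} (S : Finset (Fin t)) (I : Finset (Fin t ⊕ Fin t)) : SP t :=
  Setoid.ker fun x : Fin t ⊕ Fin t =>
    if x ∈ I then (Sum.inl true : Bool ⊕ (Fin t ⊕ Fin t))
    else if x ∈ SSfin S then Sum.inl false else Sum.inr x

/-- `N(I)` : the number of top-row (unprimed) elements of `I`. -/
def NIc {t : ℕ} (I : Finset (Fin t ⊕ Fin t)) : ℕ :=
  (I.filter fun x => x.isLeft = true).card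

/-- `M(I)` : the number of bottom-row (primed) elements of `I`. -/
def MIc {t : ℕ} (I : Finset (Fin t ⊕ Fin t)) : ℕ :=
  (I.filter fun x => x.isRight = true).card

/-- The operator `Z_{t,r}` on `V^{⊗t}`.  The inner sum over unordered partitions
`{I, (S∪S′)∖I}` (each counted once) is written as `1/2` times the sum over ordered
proper nonempty subsets `I` of `S ∪ S′`; these agree since `d_I = d_{(S∪S′)∖I}` and
the signs coincide. -/
def Zop (r n t : ℕ) : TP n t →ₗ[ℂ] TP n t :=
  (n.choose 2 : ℂ) • LinearMap.id +
  ∑ S ∈ (Finset.univ : Finset (Fin t)).powerset.filter (fun S => S ≠ ∅),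
    ((-1 : ℂ) ^ S.card) •
      (((n : ℂ) - 1) • phiD n t (bS S) +
        (1 / 2 : ℂ) •
          ∑ I ∈ (SSfin S).powerset.filter (fun I =>
              I ≠ ∅ ∧ I ≠ SSfin S ∧ ((NIc I : ℤ) ≡ (MIc I : ℤ) [ZMOD (r : ℤ)])),
            ((-1 : ℂ) ^ ((NIc I : ℤ) - (MIc I : ℤ))) • (phiD n t (dI S I) - phiD n t (bS S)))

/-- The operator `Z_{k+1/2,r}` on `V^{⊗(k+1)}`; as in `Zop`, but for `S` containing
`k+1` the inner sum is restricted to partitions in which `k+1` and `(k+1)′` lie in the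
same part. -/
def ZopHalf (r n k : ℕ) : TP n (k + 1) →ₗ[ℂ] TP n (k + 1) :=
  (n.choose 2 : ℂ) • LinearMap.id +
  ∑ S ∈ (Finset.univ : Finset (Fin (k + 1))).powerset.filter (fun S => S ≠ ∅),
    ((-1 : ℂ) ^ S.card) •
      (((n : ℂ) - 1) • phiD n (k + 1) (bS S) +
        (1 / 2 : ℂ) •
          ∑ I ∈ (SSfin S).powerset.filter (fun I =>
              I ≠ ∅ ∧ I ≠ SSfin S ∧ ((NIc I : ℤ) ≡ (MIc I : ℤ) [ZMOD (r : ℤ)]) ∧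
              (Fin.last k ∈ S →
                ((Sum.inl (Fin.last k) : Fin (k+1) ⊕ Fin (k+1)) ∈ I ↔
                  (Sum.inr (Fin.last k) : Fin (k+1) ⊕ Fin (k+1)) ∈ I))),
            ((-1 : ℂ) ^ ((NIc I : ℤ) - (MIc I : ℤ))) •
              (phiD n (k + 1) (dI S I) - phiD n (k + 1) (bS S)))

/-- The diagonal action of `κ_{r,n}` on `V^{⊗k}`. -/
def kappaOpFull (r n k : ℕ) : TP n k →ₗ[ℂ] TP n k :=
  (1 / (r : ℂ)) • ∑ l ∈ Finset.range r, ∑ i : Fin n, ∑ j : Fin n,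
    if i < j then tensorPow n k (zijMat n r l i j) else 0

/-- The diagonal action of `κ_{r,n-1}` on `V^{⊗(k+1)}`. -/
def kappaOpL (r n k : ℕ) : TP n (k + 1) →ₗ[ℂ] TP n (k + 1) :=
  (1 / (r : ℂ)) • ∑ l ∈ Finset.range r, ∑ i : Fin n, ∑ j : Fin n,
    if i < j ∧ (j : ℕ) < n - 1 then tensorPow n (k + 1) (zijMat n r l i j) else 0

/-- `w ⊗ v_n ∈ V^{⊗(k+1)}` for `w ∈ V^{⊗k}`. -/
def extendLast (n k : ℕ) (hn : 0 < n) (w : TP n k) : TP n (k + 1) :=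
  fun j => if j (Fin.last k) = lastIdx n hn then w (fun t => j t.castSucc) else 0

/-- `A ⊗ Id_{V^{⊗(l-j)}}` : the extension of an operator on `V^{⊗j}` to `V^{⊗l}`,
acting on the first `j` tensor factors. -/
def extendOp (n j l : ℕ) (hjl : j ≤ l) (A : TP n j →ₗ[ℂ] TP n j) :
    TP n l →ₗ[ℂ] TP n l where
  toFun f := fun u =>
    A (fun x : Fin j → Fin n =>
        f (fun t : Fin l => if h : (t : ℕ) < j then x ⟨t, h⟩ else u t))
      (fun s : Fin j => u (Fin.castLE hjl s))
  map_add' f g := by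
    funext u
    show A (fun x : Fin j → Fin n =>
        (f + g) (fun t : Fin l => if h : (t : ℕ) < j then x ⟨t, h⟩ else u t))
      (fun s : Fin j => u (Fin.castLE hjl s)) =
      A (fun x : Fin j → Fin n =>
        f (fun t : Fin l => if h : (t : ℕ) < j then x ⟨t, h⟩ else u t))
      (fun s : Fin j => u (Fin.castLE hjl s)) +
      A (fun x : Fin j → Fin n =>
        g (fun t : Fin l => if h : (t : ℕ) < j then x ⟨t, h⟩ else u t))
      (fun s : Fin j => u (Fin.castLE hjl s))
    have h : (fun x : Fin j → Fin n =>
        (f + g) (fun t : Fin l => if h : (t : ℕ) < j then x ⟨t, h⟩ else u t)) =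
      (fun x : Fin j → Fin n =>
        f (fun t : Fin l => if h : (t : ℕ) < j then x ⟨t, h⟩ else u t)) +
      (fun x : Fin j → Fin n =>
        g (fun t : Fin l => if h : (t : ℕ) < j then x ⟨t, h⟩ else u t)) := rfl
    rw [h, map_add]
    rfl
  map_smul' c f := by
    funext u
    show A (fun x : Fin j → Fin n =>
        (c • f) (fun t : Fin l => if h : (t : ℕ) < j then x ⟨t, h⟩ else u t))
      (fun s : Fin j => u (Fin.castLE hjl s)) =
      c • (A (fun x : Fin j → Fin n =>
        f (fun t : Fin l => if h : (t : ℕ) < j then x ⟨t, h⟩ else u t))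
      (fun s : Fin j => u (Fin.castLE hjl s)))
    have h : (fun x : Fin j → Fin n =>
        (c • f) (fun t : Fin l => if h : (t : ℕ) < j then x ⟨t, h⟩ else u t)) =
      c • (fun x : Fin j → Fin n =>
        f (fun t : Fin l => if h : (t : ℕ) < j then x ⟨t, h⟩ else u t)) := rfl
    rw [h, _root_.map_smul]
    rfl

/-! ## Diagram multiplication (statement of the structure constants) -/

/-- The bottom row of `d₁` matches the top row of `d₂`. -/
def rowMatch (k : ℕ) (d1 d2 : SP k) : Prop :=
  ∀ i j : Fin k, d1.r (Sum.inr i) (Sum.inr j) ↔ d2.r (Sum.inl i) (Sum.inl j)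

/-- Extend a setoid on `α` along an injection `e : α → β` by singleton classes on
the complement of the range. -/
def extendSetoid {α β : Type*} (e : α → β) (he : Function.Injective e)
    (d : Setoid α) : Setoid β where
  r x y := x = y ∨ ∃ a b, d.r a b ∧ x = e a ∧ y = e b
  iseqv := by
    constructor
    · intro x; exact Or.inl rfl
    · rintro x y (rfl | ⟨a, b, hab, rfl, rfl⟩)
      · exact Or.inl rfl
      · exact Or.inr ⟨b, a, d.iseqv.symm hab, rfl, rfl⟩
    · rintro x y z (rfl | ⟨a, b, hab, rfl, rfl⟩) h2
      · exact h2
      · rcases h2 with rfl | ⟨a', b', hab', hy, rfl⟩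
        · exact Or.inr ⟨a, b, hab, rfl, rfl⟩
        · have hba : b = a' := he hy
          exact Or.inr ⟨a, b', d.iseqv.trans hab (hba ▸ hab'), rfl, rfl⟩

/-- The three-row vertex set: top row, middle row, bottom row. -/
abbrev T3 (k : ℕ) : Type := Fin k ⊕ (Fin k ⊕ Fin k)

/-- `d₁` placed on the top and middle rows. -/
def embT (k : ℕ) : Fin k ⊕ Fin k → T3 k := Sum.map id Sum.inl

/-- `d₂` placed on the middle and bottom rows. -/
def embB (k : ℕ) : Fin k ⊕ Fin k → T3 k := Sum.inr

/-- The outer (top and bottom) rows. -/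
def embO (k : ℕ) : Fin k ⊕ Fin k → T3 k := Sum.map id Sum.inr

lemma embT_inj (k : ℕ) : Function.Injective (embT k) :=
  Function.Injective.sumMap Function.injective_id Sum.inl_injective

/-- The stacked three-row diagram : the join of `d₁` (on top∪middle) and `d₂`
(on middle∪bottom); its classes are the connected components. -/
def stacked (k : ℕ) (d1 d2 : SP k) : Setoid (T3 k) :=
  extendSetoid (embT k) (embT_inj k) d1 ⊔ extendSetoid (embB k) Sum.inr_injective d2

/-- The concatenation `d₁ ∘ d₂`, i.e. the restriction of the stacked diagram to the
outer rows. -/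
def compSetoid (k : ℕ) (d1 d2 : SP k) : SP k :=
  Setoid.comap (embO k) (stacked k d1 d2)

/-- `[d₁ ∘ d₂]` : the number of connected components of the stacked diagram contained
entirely in the middle row. -/
def midCount (k : ℕ) (d1 d2 : SP k) : ℕ :=
  Nat.card {q : Quotient (stacked k d1 d2) //
    ∀ x : T3 k, Quotient.mk (stacked k d1 d2) x = q → ∃ i : Fin k, x = Sum.inr (Sum.inl i)}

/-- A block entirely contained in the top row. -/
def topOnly {k : ℕ} (d : SP k) (q : Quotient d) : Prop :=
  ∀ x, Quotient.mk d x = q → ∃ i : Fin k, x = Sum.inl i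

/-- A block entirely contained in the bottom row. -/
def botOnly {k : ℕ} (d : SP k) (q : Quotient d) : Prop :=
  ∀ x, Quotient.mk d x = q → ∃ i : Fin k, x = Sum.inr i

/-- `x` lies in the block merged from the pair `pr = (q₁, q₂)`. -/
def memPair {k : ℕ} (d1 d2 : SP k) : Fin k ⊕ Fin k → Quotient d1 × Quotient d2 → Prop
  | Sum.inl i, pr => Quotient.mk d1 (Sum.inl i) = pr.1
  | Sum.inr i, pr => Quotient.mk d2 (Sum.inr i) = pr.2

/-- `d` is obtained from `d₁ ∘ d₂` by choosing an injective partial matching between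
the top-only blocks of `d₁` and the bottom-only blocks of `d₂` and merging each
matched pair into a single block. -/
def IsCoarsening (k : ℕ) (d1 d2 d : SP k) : Prop :=
  ∃ P : Finset (Quotient d1 × Quotient d2),
    (∀ pr ∈ P, topOnly d1 pr.1 ∧ botOnly d2 pr.2) ∧
    (∀ pr ∈ P, ∀ pr' ∈ P, pr.1 = pr'.1 → pr = pr') ∧
    (∀ pr ∈ P, ∀ pr' ∈ P, pr.2 = pr'.2 → pr = pr') ∧
    (∀ x y : Fin k ⊕ Fin k, d.r x y ↔
      ((compSetoid k d1 d2).r x y ∨ ∃ pr ∈ P, memPair d1 d2 x pr ∧ memPair d1 d2 y pr))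

/-- The (integer) falling factorial `(a)_b = a(a-1)⋯(a-b+1)`. -/
def fallingC (a : ℤ) (b : ℕ) : ℤ := ∏ i ∈ Finset.range b, (a - i)

/-! ## The elements `c₁, c₂` of `G(2,2,2k)` and the operator `M_{k,2,2}` -/

/-- The underlying function of the permutation `(1 2)(3 4)⋯(2k-1 2k)` of `Fin (2k)`:
it swaps `2t` and `2t+1` (0-indexed) for each `t < k`. -/
def pairFn (k : ℕ) : Fin (2 * k) → Fin (2 * k) := fun x =>
  if _ : (x : ℕ) % 2 = 0 then ⟨(x : ℕ) + 1, by have := x.2; omega⟩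
  else ⟨(x : ℕ) - 1, by have := x.2; omega⟩

lemma pairFn_invol (k : ℕ) : Function.Involutive (pairFn k) := by
  intro x
  unfold pairFn
  split_ifs with h1 h2 h3
  · refine Fin.ext ?_; simp only [Fin.val_mk] at h2 ⊢; omega
  · refine Fin.ext ?_; simp only [Fin.val_mk] at h2 ⊢; omega
  · refine Fin.ext ?_; simp only [Fin.val_mk] at h3 ⊢; omega
  · refine Fin.ext ?_; simp only [Fin.val_mk] at h3 ⊢; omega

/-- The permutation `(1 2)(3 4)⋯(2k-1 2k)` of `Fin (2k)`. -/
def pairPerm (k : ℕ) : Equiv.Perm (Fin (2 * k)) :=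
  Function.Involutive.toPerm (pairFn k) (pairFn_invol k)

/-- `c₂` : the permutation matrix of `(1 2)(3 4)⋯(2k-1 2k)`. -/
def c2Mat (k : ℕ) : Matrix (Fin (2 * k)) (Fin (2 * k)) ℂ :=
  monoMat (2 * k) (pairPerm k) (fun _ => 1)

/-- The diagonal matrix `diag(-1,-1,1,…,1)`. -/
def dMat (k : ℕ) : Matrix (Fin (2 * k)) (Fin (2 * k)) ℂ :=
  Matrix.diagonal fun t => if (t : ℕ) < 2 then (-1 : ℂ) else 1

/-- `c₁ = D · c₂`. -/
def c1Mat (k : ℕ) : Matrix (Fin (2 * k)) (Fin (2 * k)) ℂ := dMat k * c2Mat k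

/-- Two matrices are conjugate by an element of `G(r,p,n)`. -/
def conjIn (r p n : ℕ) (c x : Matrix (Fin n) (Fin n) ℂ) : Prop :=
  ∃ g ∈ GSet r p n, g * c = x * g

/-- The conjugacy class of `c` in `G(r,p,n)`. -/
def conjClass (r p n : ℕ) (c : Matrix (Fin n) (Fin n) ℂ) :
    Set (Matrix (Fin n) (Fin n) ℂ) :=
  {h | h ∈ GSet r p n ∧ conjIn r p n c h}

/-- The set partition of `{1,…,k,1′,…,k′}` all of whose blocks are singletons. -/
def singletonSP (k : ℕ) : SP k := ⟨Eq, eq_equivalence⟩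

/-- The operator `M_{k,2,2} = φ_k(x_{d₀})` on `(ℂ^{2k})^{⊗k}`, where `d₀` is the set
partition with all blocks singletons. -/
def Mop (k : ℕ) : TP (2 * k) k →ₗ[ℂ] TP (2 * k) k :=
  phiX (2 * k) k (singletonSP k)

/-! ### Auxiliary material for statement 4 -/

instance SPfintype (k : ℕ) : Fintype (SP k) := by
  have : Finite (SP k) := by
    apply Finite.of_injective (fun d : SP k => d.r)
    intro a b h
    exact Setoid.ext fun x y => iff_of_eq (congrFun (congrFun h x) y)
  exact Fintype.ofFinite _

lemma coeX_eq (n t : ℕ) (d : SP t) (c : Fin t ⊕ Fin t → Fin n) :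
    coeX n t d c = if d = Setoid.ker c then 1 else 0 := by
  have h : (∀ a b : Fin t ⊕ Fin t, d.r a b ↔ c a = c b) ↔ d = Setoid.ker c := by
    constructor
    · intro h; exact Setoid.ext fun a b => h a b
    · rintro rfl a b; exact Iff.rfl
  unfold coeX
  by_cases hd : d = Setoid.ker c
  · rw [if_pos (h.mpr hd), if_pos hd]
  · rw [if_neg (fun hh => hd (h.mp hh)), if_neg hd]

@[simp] lemma kernelMap_apply (n k : ℕ) (K : (Fin k → Fin n) → (Fin k → Fin n) → ℂ)
    (f : TP n k) (o : Fin k → Fin n) :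
    kernelMap n k K f o = ∑ i : Fin k → Fin n, K o i * f i := rfl

lemma kernelMap_comp (n k : ℕ) (K K' : (Fin k → Fin n) → (Fin k → Fin n) → ℂ) :
    kernelMap n k K ∘ₗ kernelMap n k K' =
      kernelMap n k fun o i => ∑ j : Fin k → Fin n, K o j * K' j i := by
  apply LinearMap.ext; intro f; funext o
  show ∑ j : Fin k → Fin n, K o j * (∑ i : Fin k → Fin n, K' j i * f i)
      = ∑ i : Fin k → Fin n, (∑ j : Fin k → Fin n, K o j * K' j i) * f i
  simp only [Finset.mul_sum, Finset.sum_mul, ← mul_assoc]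
  exact Finset.sum_comm

lemma kernelMap_sum_smul {ι : Type} (s : Finset ι) (n k : ℕ) (c : ι → ℂ)
    (K : ι → (Fin k → Fin n) → (Fin k → Fin n) → ℂ) :
    (∑ d ∈ s, c d • kernelMap n k (K d)) =
      kernelMap n k fun o i => ∑ d ∈ s, c d * K d o i := by
  apply LinearMap.ext; intro f; funext o
  rw [LinearMap.sum_apply]
  show (∑ d ∈ s, (c d • kernelMap n k (K d)) f) o
      = ∑ i : Fin k → Fin n, (∑ d ∈ s, c d * K d o i) * f i
  rw [Finset.sum_apply]
  simp only [LinearMap.smul_apply, Pi.smul_apply, smul_eq_mul, kernelMap_apply,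
    Finset.mul_sum, Finset.sum_mul, ← mul_assoc]
  exact Finset.sum_comm

lemma kernelMap_sum {ι : Type} (s : Finset ι) (n k : ℕ)
    (K : ι → (Fin k → Fin n) → (Fin k → Fin n) → ℂ) :
    (∑ d ∈ s, kernelMap n k (K d)) =
      kernelMap n k fun o i => ∑ d ∈ s, K d o i := by
  apply LinearMap.ext; intro f; funext o
  rw [LinearMap.sum_apply]
  show (∑ d ∈ s, kernelMap n k (K d) f) o
      = ∑ i : Fin k → Fin n, (∑ d ∈ s, K d o i) * f i
  rw [Finset.sum_apply]
  simp only [kernelMap_apply, Finset.sum_mul]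
  exact Finset.sum_comm

lemma sum_coeX (n k : ℕ) (g : SP k → ℂ) (c : Fin k ⊕ Fin k → Fin n) :
    ∑ d : SP k, g d * coeX n k d c = g (Setoid.ker c) := by
  rw [Finset.sum_eq_single (Setoid.ker c)]
  · rw [coeX_eq, if_pos rfl, mul_one]
  · intro d _ hd
    rw [coeX_eq, if_neg hd, mul_zero]
  · intro h; exact absurd (Finset.mem_univ _) h

/-! #### Representative-independence of the structure constants -/

lemma exists_perm {k n : ℕ} (f f' : Fin k ⊕ Fin k → Fin n)
    (h : Setoid.ker f = Setoid.ker f') :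
    ∃ τ : Equiv.Perm (Fin n), ∀ x, τ (f x) = f' x := by
  classical
  have key : ∀ x y, f x = f y → f' x = f' y := by
    intro x y hxy
    have hk : Setoid.ker f x y := hxy
    rw [h] at hk
    exact hk
  have key' : ∀ x y, f' x = f' y → f x = f y := by
    intro x y hxy
    have hk : Setoid.ker f' x y := hxy
    rw [← h] at hk
    exact hk
  let g : ↥(Set.range f) → ↥(Set.range f') :=
    fun v => ⟨f' (Classical.choose v.2), Set.mem_range_self _⟩
  have hg : ∀ (v : ↥(Set.range f)), f (Classical.choose v.2) = (v : Fin n) :=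
    fun v => Classical.choose_spec v.2
  have ginj : Function.Injective g := by
    rintro v w hvw
    have h1 : f' (Classical.choose v.2) = f' (Classical.choose w.2) :=
      congrArg Subtype.val hvw
    have h2 : f (Classical.choose v.2) = f (Classical.choose w.2) := key' _ _ h1
    apply Subtype.ext
    rw [← hg v, ← hg w]; exact h2
  have gsurj : Function.Surjective g := by
    rintro ⟨w, hw⟩
    have hy0s : f' (Classical.choose hw) = w := Classical.choose_spec hw
    refine ⟨⟨f (Classical.choose hw), Set.mem_range_self _⟩, Subtype.ext ?_⟩
    show f' (Classical.choose (⟨f (Classical.choose hw), Set.mem_range_self _⟩ :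
      ↥(Set.range f)).2) = w
    have h1 : f (Classical.choose (⟨f (Classical.choose hw), Set.mem_range_self _⟩ :
        ↥(Set.range f)).2) = f (Classical.choose hw) :=
      hg ⟨f (Classical.choose hw), Set.mem_range_self _⟩
    rw [key _ _ h1, hy0s]
  let e : ↥(Set.range f) ≃ ↥(Set.range f') := Equiv.ofBijective g ⟨ginj, gsurj⟩
  have hcard : Fintype.card ↥(Set.range f)ᶜ = Fintype.card ↥(Set.range f')ᶜ := by
    rw [Fintype.card_compl_set, Fintype.card_compl_set, Fintype.card_congr e]
  let ec : ↥(Set.range f)ᶜ ≃ ↥(Set.range f')ᶜ := Fintype.equivOfCardEq hcard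
  let ec' : {v // ¬ v ∈ Set.range f} ≃ {v // ¬ v ∈ Set.range f'} :=
    (Equiv.subtypeEquivRight (fun x => (Set.mem_compl_iff _ _).symm)).trans
      (ec.trans (Equiv.subtypeEquivRight (fun x => Set.mem_compl_iff _ _)))
  refine ⟨Equiv.subtypeCongr e ec', ?_⟩
  intro x
  have hx : f x ∈ Set.range f := Set.mem_range_self _
  have hval : Equiv.subtypeCongr e ec' (f x) = ((e ⟨f x, hx⟩ : ↥(Set.range f')) : Fin n) := by
    simp only [Equiv.subtypeCongr, Equiv.trans_apply]
    rw [Equiv.sumCompl_symm_apply_of_pos hx]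
    simp
  rw [hval]
  show f' (Classical.choose (⟨f x, hx⟩ : ↥(Set.range f)).2) = f' x
  exact key _ _ (hg ⟨f x, hx⟩)

lemma ker_elim_comp {k n : ℕ} (τ : Equiv.Perm (Fin n)) (u w : Fin k → Fin n) :
    Setoid.ker (Sum.elim (fun a => τ (u a)) (fun a => τ (w a))) = Setoid.ker (Sum.elim u w) := by
  apply Setoid.ext
  intro a b
  rw [Setoid.ker_def, Setoid.ker_def]
  cases a <;> cases b <;> simp

lemma card_rep_eq {k n : ℕ} (d1 d2 : SP k) (i o i' o' : Fin k → Fin n)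
    (h : Setoid.ker (Sum.elim i o) = Setoid.ker (Sum.elim i' o')) :
    (Finset.univ.filter fun j : Fin k → Fin n =>
       Setoid.ker (Sum.elim j o) = d1 ∧ Setoid.ker (Sum.elim i j) = d2).card =
    (Finset.univ.filter fun j : Fin k → Fin n =>
       Setoid.ker (Sum.elim j o') = d1 ∧ Setoid.ker (Sum.elim i' j) = d2).card := by
  obtain ⟨τ, hτ⟩ := exists_perm _ _ h
  have hto : ∀ a, τ (o a) = o' a := fun a => hτ (Sum.inr a)
  have hti : ∀ a, τ (i a) = i' a := fun a => hτ (Sum.inl a)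
  have ho' : o' = fun a => τ (o a) := funext fun a => (hto a).symm
  have hi' : i' = fun a => τ (i a) := funext fun a => (hti a).symm
  subst ho'
  subst hi'
  apply Finset.card_bij' (fun j _ => fun a => τ (j a)) (fun j _ => fun a => τ.symm (j a))
  · intro j hj
    rw [Finset.mem_filter] at hj ⊢
    refine ⟨Finset.mem_univ _, ?_, ?_⟩
    · rw [ker_elim_comp τ j o]
      exact hj.2.1
    · rw [ker_elim_comp τ i j]
      exact hj.2.2
  · intro j hj
    rw [Finset.mem_filter] at hj ⊢
    refine ⟨Finset.mem_univ _, ?_, ?_⟩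
    · rw [← ker_elim_comp τ (fun a => τ.symm (j a)) o]
      simpa using hj.2.1
    · rw [← ker_elim_comp τ i (fun a => τ.symm (j a))]
      simpa using hj.2.2
  · intro j _; funext a; simp
  · intro j _; funext a; simp

noncomputable def Ncomp (n k : ℕ) (d1 d2 d : SP k) : ℕ :=
  if h : ∃ io : (Fin k → Fin n) × (Fin k → Fin n), Setoid.ker (Sum.elim io.1 io.2) = d then
    (Finset.univ.filter fun j : Fin k → Fin n =>
      Setoid.ker (Sum.elim j h.choose.2) = d1 ∧ Setoid.ker (Sum.elim h.choose.1 j) = d2).card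
  else 0

lemma Ncomp_spec (n k : ℕ) (d1 d2 : SP k) (i o : Fin k → Fin n) :
    Ncomp n k d1 d2 (Setoid.ker (Sum.elim i o)) =
      (Finset.univ.filter fun j : Fin k → Fin n =>
        Setoid.ker (Sum.elim j o) = d1 ∧ Setoid.ker (Sum.elim i j) = d2).card := by
  have hex : ∃ io : (Fin k → Fin n) × (Fin k → Fin n),
      Setoid.ker (Sum.elim io.1 io.2) = Setoid.ker (Sum.elim i o) := ⟨(i, o), rfl⟩
  rw [Ncomp, dif_pos hex]
  exact (card_rep_eq d1 d2 _ _ i o hex.choose_spec).symm.symm ▸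
    card_rep_eq d1 d2 hex.choose.1 hex.choose.2 i o hex.choose_spec

lemma phiX_comp (n k : ℕ) (d1 d2 : SP k) :
    phiX n k d1 ∘ₗ phiX n k d2 =
      ∑ d : SP k, (Ncomp n k d1 d2 d : ℂ) • phiX n k d := by
  unfold phiX
  rw [kernelMap_comp, kernelMap_sum_smul]
  congr 1
  funext o i
  rw [sum_coeX n k (fun d => (Ncomp n k d1 d2 d : ℂ)) (Sum.elim i o), Ncomp_spec]
  rw [← Finset.sum_boole
    (fun j : Fin k → Fin n =>
      Setoid.ker (Sum.elim j o) = d1 ∧ Setoid.ker (Sum.elim i j) = d2) Finset.univ]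
  apply Finset.sum_congr rfl
  intro j _
  rw [coeX_eq, coeX_eq]
  by_cases h1 : Setoid.ker (Sum.elim j o) = d1
  · by_cases h2 : Setoid.ker (Sum.elim i j) = d2
    · rw [if_pos h1.symm, if_pos h2.symm, if_pos ⟨h1, h2⟩, one_mul]
    · rw [if_pos h1.symm, if_neg (fun hh => h2 hh.symm), mul_zero,
        if_neg (fun hh : _ ∧ _ => h2 hh.2)]
  · rw [if_neg (fun hh => h1 hh.symm), zero_mul,
      if_neg (fun hh : _ ∧ _ => h1 hh.1)]

/-! #### Translation of the conditions on blocks into conditions on value counts -/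

def ctv {n k : ℕ} (u : Fin k → Fin n) (v : Fin n) : ℕ := Nat.card {a : Fin k // u a = v}

lemma ctv_ne_zero_iff {n k : ℕ} (u : Fin k → Fin n) (v : Fin n) :
    ctv u v ≠ 0 ↔ ∃ a, u a = v := by
  unfold ctv
  rw [Nat.card_ne_zero]
  constructor
  · rintro ⟨⟨⟨a, ha⟩⟩, -⟩
    exact ⟨a, ha⟩
  · rintro ⟨a, ha⟩
    exact ⟨⟨⟨a, ha⟩⟩, inferInstance⟩

lemma topCt_ker {n k : ℕ} (i o : Fin k → Fin n) (x : Fin k ⊕ Fin k) :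
    topCt (Setoid.ker (Sum.elim i o)) (Quotient.mk _ x) = ctv i (Sum.elim i o x) := by
  apply Nat.card_congr
  apply Equiv.subtypeEquivRight
  intro a
  rw [Quotient.eq]
  exact Setoid.ker_def

lemma botCt_ker {n k : ℕ} (i o : Fin k → Fin n) (x : Fin k ⊕ Fin k) :
    botCt (Setoid.ker (Sum.elim i o)) (Quotient.mk _ x) = ctv o (Sum.elim i o x) := by
  apply Nat.card_congr
  apply Equiv.subtypeEquivRight
  intro a
  rw [Quotient.eq]
  exact Setoid.ker_def

lemma nBlocks_ker {n k : ℕ} (f : Fin k ⊕ Fin k → Fin n) :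
    nBlocks (Setoid.ker f) = Nat.card (Set.range f) :=
  Nat.card_congr (Setoid.quotientKerEquivRange f)

lemma nBlocks_ker_le {n k : ℕ} (f : Fin k ⊕ Fin k → Fin n) :
    nBlocks (Setoid.ker f) ≤ n := by
  rw [nBlocks_ker]
  calc Nat.card (Set.range f) = (Set.range f).ncard := Nat.card_coe_set_eq _
    _ ≤ (Set.univ : Set (Fin n)).ncard := Set.ncard_le_ncard (Set.subset_univ _) Set.finite_univ
    _ = Nat.card (Fin n) := Set.ncard_univ _
    _ = n := Nat.card_eq_fintype_card.trans (Fintype.card_fin n)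

lemma range_eq_univ_of_card {n k : ℕ} (f : Fin k ⊕ Fin k → Fin n)
    (h : Nat.card (Set.range f) = n) : Set.range f = Set.univ := by
  apply Set.eq_of_subset_of_ncard_le (Set.subset_univ _)
  rw [Set.ncard_univ, Nat.card_eq_fintype_card, Fintype.card_fin, ← Nat.card_coe_set_eq, h]

def PiP (r : ℕ) {n : ℕ} (A B : Fin n → ℕ) : Prop :=
  ∀ v, (A v : ℤ) ≡ (B v : ℤ) [ZMOD (r : ℤ)]

def LamP (r m : ℕ) {n : ℕ} (A B : Fin n → ℕ) : Prop :=
  (∀ v, A v ≠ 0 ∨ B v ≠ 0) ∧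
  (∀ v, ((A v : ℤ) ≡ (B v : ℤ) [ZMOD (m : ℤ)]) ∧ ¬ ((A v : ℤ) ≡ (B v : ℤ) [ZMOD (r : ℤ)])) ∧
  (∀ v w, (A v : ℤ) - (B v : ℤ) ≡ (A w : ℤ) - (B w : ℤ) [ZMOD (r : ℤ)])

lemma mem_range_elim {n k : ℕ} (i o : Fin k → Fin n) (v : Fin n) :
    v ∈ Set.range (Sum.elim i o) ↔ ctv i v ≠ 0 ∨ ctv o v ≠ 0 := by
  rw [ctv_ne_zero_iff, ctv_ne_zero_iff]
  constructor
  · rintro ⟨x | x, rfl⟩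
    · exact Or.inl ⟨x, rfl⟩
    · exact Or.inr ⟨x, rfl⟩
  · rintro (⟨a, ha⟩ | ⟨a, ha⟩)
    · exact ⟨Sum.inl a, ha⟩
    · exact ⟨Sum.inr a, ha⟩

lemma inPi_ker_iff {r p n k : ℕ} (i o : Fin k → Fin n) :
    inPi r (Setoid.ker (Sum.elim i o)) ↔ PiP r (ctv i) (ctv o) := by
  constructor
  · intro h v
    by_cases hv : v ∈ Set.range (Sum.elim i o)
    · obtain ⟨x, rfl⟩ := hv
      have := h (Quotient.mk _ x)
      rwa [topCt_ker, botCt_ker] at this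
    · rw [mem_range_elim] at hv
      push_neg at hv
      rw [hv.1, hv.2]
  · intro h q
    obtain ⟨x, hx⟩ := Quotient.exists_rep q
    rw [← hx, topCt_ker, botCt_ker]
    exact h _

lemma inLambda_ker_iff {r p n k : ℕ} (i o : Fin k → Fin n) :
    inLambda r p n (Setoid.ker (Sum.elim i o)) ↔ LamP r (r / p) (ctv i) (ctv o) := by
  constructor
  · rintro ⟨hb, hmod, hconst⟩
    have huniv : Set.range (Sum.elim i o) = Set.univ :=
      range_eq_univ_of_card _ (by rw [← nBlocks_ker]; exact hb)
    have hmem : ∀ v : Fin n, v ∈ Set.range (Sum.elim i o) := by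
      intro v; rw [huniv]; trivial
    refine ⟨?_, ?_, ?_⟩
    · intro v
      rw [← mem_range_elim]
      exact hmem v
    · intro v
      obtain ⟨x, rfl⟩ := hmem v
      have := hmod (Quotient.mk _ x)
      rwa [topCt_ker, botCt_ker] at this
    · intro v w
      obtain ⟨x, rfl⟩ := hmem v
      obtain ⟨y, rfl⟩ := hmem w
      have := hconst (Quotient.mk _ x) (Quotient.mk _ y)
      rwa [topCt_ker, botCt_ker, topCt_ker, botCt_ker] at this
  · rintro ⟨h0, hmod, hconst⟩
    have huniv : Set.range (Sum.elim i o) = Set.univ := by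
      apply Set.eq_univ_of_forall
      intro v
      rw [mem_range_elim]
      exact h0 v
    refine ⟨?_, ?_, ?_⟩
    · rw [nBlocks_ker, huniv]
      rw [Nat.card_coe_set_eq, Set.ncard_univ, Nat.card_eq_fintype_card, Fintype.card_fin]
    · intro q
      obtain ⟨x, hx⟩ := Quotient.exists_rep q
      rw [← hx, topCt_ker, botCt_ker]
      exact hmod _
    · intro q q'
      obtain ⟨x, hx⟩ := Quotient.exists_rep q
      obtain ⟨y, hy⟩ := Quotient.exists_rep q'
      rw [← hx, ← hy, topCt_ker, botCt_ker, topCt_ker, botCt_ker]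
      exact hconst _ _

lemma not_inTheta_ker {r p n k : ℕ} (i o : Fin k → Fin n) :
    ¬ inTheta r p n (Setoid.ker (Sum.elim i o)) := by
  rintro ⟨hlt, -, -⟩
  exact absurd (nBlocks_ker_le (Sum.elim i o)) (not_le.mpr hlt)

/-! #### The arithmetic core -/

lemma modEq_sub_zero {N a b : ℤ} : a ≡ b [ZMOD N] ↔ a - b ≡ 0 [ZMOD N] := by
  rw [Int.modEq_iff_dvd, Int.modEq_iff_dvd, zero_sub, neg_sub]

lemma arith {n : ℕ} (hn : 0 < n) (r m : ℕ) (hm : (m : ℤ) ∣ (r : ℤ))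
    (A B C : Fin n → ℕ)
    (h1 : PiP r C B ∨ LamP r m C B)
    (h2 : PiP r A C ∨ LamP r m A C) :
    PiP r A B ∨ LamP r m A B := by
  rcases h1 with h1 | ⟨h1a, h1b, h1c⟩
  · rcases h2 with h2 | ⟨h2a, h2b, h2c⟩
    · exact Or.inl fun v => (h2 v).trans (h1 v)
    · right
      refine ⟨?_, ?_, ?_⟩
      · intro v
        by_contra hcon
        push_neg at hcon
        obtain ⟨hA, hB⟩ := hcon
        apply (h2b v).2
        have h0 : (C v : ℤ) ≡ 0 [ZMOD (r : ℤ)] := by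
          have := h1 v; rwa [hB, Nat.cast_zero] at this
        calc (A v : ℤ) = 0 := by rw [hA, Nat.cast_zero]
          _ ≡ (C v : ℤ) [ZMOD (r : ℤ)] := h0.symm
      · intro v
        exact ⟨(h2b v).1.trans (Int.ModEq.of_dvd hm (h1 v)),
          fun hab => (h2b v).2 (hab.trans (h1 v).symm)⟩
      · intro v w
        have e1 : (A v : ℤ) - B v ≡ (A v : ℤ) - C v [ZMOD (r : ℤ)] :=
          (Int.ModEq.refl _).sub (h1 v).symm
        have e3 : (A w : ℤ) - C w ≡ (A w : ℤ) - B w [ZMOD (r : ℤ)] :=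
          (Int.ModEq.refl _).sub (h1 w)
        exact e1.trans ((h2c v w).trans e3)
  · rcases h2 with h2 | ⟨h2a, h2b, h2c⟩
    · right
      refine ⟨?_, ?_, ?_⟩
      · intro v
        by_contra hcon
        push_neg at hcon
        obtain ⟨hA, hB⟩ := hcon
        apply (h1b v).2
        have h0 : (C v : ℤ) ≡ 0 [ZMOD (r : ℤ)] := by
          have := (h2 v).symm; rwa [hA, Nat.cast_zero] at this
        calc (C v : ℤ) ≡ 0 [ZMOD (r : ℤ)] := h0
          _ = (B v : ℤ) := by rw [hB, Nat.cast_zero]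
      · intro v
        exact ⟨(Int.ModEq.of_dvd hm (h2 v)).trans (h1b v).1,
          fun hab => (h1b v).2 ((h2 v).symm.trans hab)⟩
      · intro v w
        have e1 : (A v : ℤ) - B v ≡ (C v : ℤ) - B v [ZMOD (r : ℤ)] :=
          (h2 v).sub (Int.ModEq.refl _)
        have e3 : (C w : ℤ) - B w ≡ (A w : ℤ) - B w [ZMOD (r : ℤ)] :=
          (h2 w).symm.sub (Int.ModEq.refl _)
        exact e1.trans ((h1c v w).trans e3)
    · obtain ⟨v0⟩ : Nonempty (Fin n) := ⟨⟨0, hn⟩⟩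
      have const : ∀ v, (A v : ℤ) - B v ≡ (A v0 : ℤ) - B v0 [ZMOD (r : ℤ)] := by
        intro v
        calc (A v : ℤ) - B v = ((A v : ℤ) - C v) + ((C v : ℤ) - B v) := by ring
          _ ≡ ((A v0 : ℤ) - C v0) + ((C v0 : ℤ) - B v0) [ZMOD (r : ℤ)] :=
            (h2c v v0).add (h1c v v0)
          _ = (A v0 : ℤ) - B v0 := by ring
      by_cases h0 : (A v0 : ℤ) ≡ (B v0 : ℤ) [ZMOD (r : ℤ)]
      · left
        intro v
        exact modEq_sub_zero.mpr ((const v).trans (modEq_sub_zero.mp h0))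
      · right
        refine ⟨?_, ?_, fun v w => (const v).trans (const w).symm⟩
        · intro v
          by_contra hcon
          push_neg at hcon
          obtain ⟨hA, hB⟩ := hcon
          apply h0
          apply modEq_sub_zero.mpr
          have hz : (0 : ℤ) ≡ (A v0 : ℤ) - B v0 [ZMOD (r : ℤ)] := by
            calc (0 : ℤ) = ((A v : ℤ) - C v) + ((C v : ℤ) - B v) := by
                  rw [hA, hB]; push_cast; ring
              _ ≡ ((A v0 : ℤ) - C v0) + ((C v0 : ℤ) - B v0) [ZMOD (r : ℤ)] :=
                (h2c v v0).add (h1c v v0)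
              _ = (A v0 : ℤ) - B v0 := by ring
          exact hz.symm
        · intro v
          refine ⟨(h2b v).1.trans (h1b v).1, fun hab => h0 ?_⟩
          exact modEq_sub_zero.mpr ((const v).symm.trans (modEq_sub_zero.mp hab))

lemma core (r p n k : ℕ) (hn : 0 < n) (hpr : p ∣ r)
    (i o j : Fin k → Fin n)
    (h1 : inA r p n (Setoid.ker (Sum.elim j o)))
    (h2 : inA r p n (Setoid.ker (Sum.elim i j))) :
    inA r p n (Setoid.ker (Sum.elim i o)) := by
  have hm : ((r / p : ℕ) : ℤ) ∣ (r : ℤ) := Int.natCast_dvd_natCast.mpr (Nat.div_dvd_of_dvd hpr)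
  have h1' : PiP r (ctv j) (ctv o) ∨ LamP r (r / p) (ctv j) (ctv o) := by
    rcases h1 with h | h | h
    · exact Or.inl ((inPi_ker_iff (p := p) j o).mp h)
    · exact Or.inr ((inLambda_ker_iff j o).mp h)
    · exact absurd h (not_inTheta_ker j o)
  have h2' : PiP r (ctv i) (ctv j) ∨ LamP r (r / p) (ctv i) (ctv j) := by
    rcases h2 with h | h | h
    · exact Or.inl ((inPi_ker_iff (p := p) i j).mp h)
    · exact Or.inr ((inLambda_ker_iff i j).mp h)
    · exact absurd h (not_inTheta_ker i j)
  rcases arith hn r (r / p) hm (ctv i) (ctv o) (ctv j) h1' h2' with h | h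
  · exact Or.inl ((inPi_ker_iff (p := p) i o).mpr h)
  · exact Or.inr (Or.inl ((inLambda_ker_iff i o).mpr h))

/-! #### Assembly -/

lemma gen_comp (r p n k : ℕ) (hn : 0 < n) (hpr : p ∣ r) (d1 d2 : SP k)
    (h1 : inA r p n d1) (h2 : inA r p n d2) :
    phiX n k d1 ∘ₗ phiX n k d2 ∈ Submodule.span ℂ (TanSet r p n k) := by
  rw [phiX_comp]
  apply Submodule.sum_mem
  intro d _
  by_cases h0 : Ncomp n k d1 d2 d = 0
  · rw [h0, Nat.cast_zero, zero_smul]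
    exact Submodule.zero_mem _
  · apply Submodule.smul_mem
    apply Submodule.subset_span
    refine ⟨d, ?_, rfl⟩
    rw [Ncomp] at h0
    split_ifs at h0 with hex
    · obtain ⟨j, hj⟩ := Finset.card_ne_zero.mp h0
      rw [Finset.mem_filter] at hj
      have hA1 : inA r p n (Setoid.ker (Sum.elim j hex.choose.2)) := by
        rw [hj.2.1]; exact h1
      have hA2 : inA r p n (Setoid.ker (Sum.elim hex.choose.1 j)) := by
        rw [hj.2.2]; exact h2
      have := core r p n k hn hpr hex.choose.1 hex.choose.2 j hA1 hA2
      rwa [hex.choose_spec] at this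
    · exact absurd rfl h0

/-! #### The identity -/

def pairSP (k : ℕ) : SP k := Setoid.ker (Sum.elim (fun a => a) (fun a => a))

lemma inPi_of_coarse (r k : ℕ) (d : SP k) (hd : ∀ a b, (pairSP k).r a b → d.r a b) :
    inPi r d := by
  intro q
  have heq : topCt d q = botCt d q := by
    apply Nat.card_congr
    apply Equiv.subtypeEquivRight
    intro a
    have hab : d.r (Sum.inl a) (Sum.inr a) := hd _ _ rfl
    constructor
    · intro h
      exact ((Quotient.eq.mpr hab).symm).trans h
    · intro h
      exact (Quotient.eq.mpr hab).trans h
  rw [heq]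

lemma id_eq_sum (n k : ℕ) :
    (LinearMap.id : TP n k →ₗ[ℂ] TP n k) =
      ∑ d ∈ Finset.univ.filter (fun d : SP k => ∀ a b, (pairSP k).r a b → d.r a b),
        phiX n k d := by
  unfold phiX
  rw [kernelMap_sum]
  apply LinearMap.ext; intro f; funext o
  show f o = ∑ i : Fin k → Fin n,
      (∑ d ∈ Finset.univ.filter (fun d : SP k => ∀ a b, (pairSP k).r a b → d.r a b),
        coeX n k d (Sum.elim i o)) * f i
  have key : ∀ i : Fin k → Fin n,
      (∑ d ∈ Finset.univ.filter (fun d : SP k => ∀ a b, (pairSP k).r a b → d.r a b),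
        coeX n k d (Sum.elim i o)) = if i = o then 1 else 0 := by
    intro i
    rw [Finset.sum_congr rfl (fun d _ => coeX_eq n k d (Sum.elim i o)),
      Finset.sum_ite_eq' _ (Setoid.ker (Sum.elim i o)) (fun _ => (1 : ℂ))]
    have hmem : (Setoid.ker (Sum.elim i o) ∈
        Finset.univ.filter (fun d : SP k => ∀ a b, (pairSP k).r a b → d.r a b)) ↔ i = o := by
      rw [Finset.mem_filter]
      constructor
      · rintro ⟨-, hco⟩
        funext a
        exact hco (Sum.inl a) (Sum.inr a) rfl
      · rintro rfl
        refine ⟨Finset.mem_univ _, ?_⟩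
        intro a b hab
        have hab' : Sum.elim (fun x : Fin k => x) (fun x : Fin k => x) a
            = Sum.elim (fun x : Fin k => x) (fun x : Fin k => x) b := hab
        show Sum.elim i i a = Sum.elim i i b
        cases a <;> cases b <;> simp at hab' ⊢ <;> rw [hab']
    by_cases hio : i = o
    · rw [if_pos (hmem.mpr hio), if_pos hio]
    · rw [if_neg (fun hc => hio (hmem.mp hc)), if_neg hio]
  rw [Finset.sum_congr rfl (fun i _ => by rw [key i])]
  have hterm : ∀ i : Fin k → Fin n,
      (if i = o then (1 : ℂ) else 0) * f i = if i = o then f i else 0 := by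
    intro i; split_ifs <;> simp
  rw [Finset.sum_congr rfl (fun i _ => hterm i), Finset.sum_ite_eq' Finset.univ o f,
    if_pos (Finset.mem_univ o)]

lemma id_mem (r p n k : ℕ) :
    (LinearMap.id : TP n k →ₗ[ℂ] TP n k) ∈ Submodule.span ℂ (TanSet r p n k) := by
  rw [id_eq_sum]
  apply Submodule.sum_mem
  intro d hd
  apply Submodule.subset_span
  rw [Finset.mem_filter] at hd
  exact ⟨d, Or.inl (inPi_of_coarse r k d hd.2), rfl⟩

/-- The span of `{φ_k(x_d) : d ∈ A_k(r,p,n)}` is closed under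
composition and contains the identity, hence is a unital subalgebra of
`End(V^{⊗k})`. -/
theorem statement4 (r p n k : ℕ) (hr : 0 < r) (hp : 0 < p) (hn : 0 < n) (hk : 0 < k)
    (hpr : p ∣ r) :
    (∀ F ∈ Submodule.span ℂ (TanSet r p n k),
      ∀ G ∈ Submodule.span ℂ (TanSet r p n k),
        F ∘ₗ G ∈ Submodule.span ℂ (TanSet r p n k)) ∧
    (LinearMap.id : TP n k →ₗ[ℂ] TP n k) ∈ Submodule.span ℂ (TanSet r p n k) := by
  constructor
  · intro F hF G hG
    have step1 : ∀ F', F' ∈ TanSet r p n k → ∀ G' ∈ Submodule.span ℂ (TanSet r p n k),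
        F' ∘ₗ G' ∈ Submodule.span ℂ (TanSet r p n k) := by
      rintro F' ⟨d1, hd1, rfl⟩ G' hG'
      induction hG' using Submodule.span_induction with
      | mem x hx =>
        obtain ⟨d2, hd2, rfl⟩ := hx
        exact gen_comp r p n k hn hpr d1 d2 hd1 hd2
      | zero => rw [LinearMap.comp_zero]; exact Submodule.zero_mem _
      | add x y hx hy ihx ihy => rw [LinearMap.comp_add]; exact Submodule.add_mem _ ihx ihy
      | smul a x hx ihx => rw [LinearMap.comp_smul]; exact Submodule.smul_mem _ a ihx
    induction hF using Submodule.span_induction with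
    | mem x hx => exact step1 x hx G hG
    | zero => rw [LinearMap.zero_comp]; exact Submodule.zero_mem _
    | add x y hx hy ihx ihy => rw [LinearMap.add_comp]; exact Submodule.add_mem _ ihx ihy
    | smul a x hx ihx => rw [LinearMap.smul_comp]; exact Submodule.smul_mem _ a ihx
  · exact id_mem r p n k


end Tanabe
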